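/- Let ℓ ≥ 1 be an integer and let k, k' ∈ {π m/(ℓ+1) : m ∈ {1, …, ℓ}}. Then (2/(ℓ+1)) ∑_{x=1}^{ℓ} sin(x k)² sin(x k')² = 1/2 + (1/4)(δ_{k,k'} + δ_{k+k',π}), where δ denotes the Kronecker delta (δ_{a,b} = 1 if a = b and 0 otherwise). -/

import Mathlib

open Real
set_option maxHeartbeats 1000000

lemma cos_sum_not_dvd (ℓ : ℕ) (n : ℤ) (hn : ¬ ((ℓ:ℤ)+1) ∣ n) :
    ∑ x ∈ Finset.Icc 1 ℓ, Real.cos (2*π*(n:ℝ)*(x:ℝ)/((ℓ:ℝ)+1)) = -1 := by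
  have hl0 : ((ℓ:ℝ)+1) ≠ 0 := by positivity
  set θ : ℝ := 2*π*(n:ℝ)/((ℓ:ℝ)+1) with hθ
  have hω1 : Complex.exp ((θ:ℂ)*Complex.I) ≠ 1 := by
    rw [Ne, Complex.exp_eq_one_iff]
    rintro ⟨j, hj⟩
    apply hn
    have hI : (Complex.I) ≠ 0 := Complex.I_ne_zero
    have h1 : (θ:ℂ) = ((j:ℝ)*(2*π) : ℝ) := by
      push_cast
      have : (θ:ℂ)*Complex.I = ((j:ℂ)*(2*π))*Complex.I := by rw [hj]; ring
      exact mul_right_cancel₀ hI this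
    have h2 : θ = (j:ℝ)*(2*π) := by exact_mod_cast h1
    rw [hθ] at h2
    have h3 : (n:ℝ) = (j:ℝ)*((ℓ:ℝ)+1) := by
      field_simp at h2
      nlinarith [Real.pi_pos]
    have h4 : n = j*((ℓ:ℤ)+1) := by exact_mod_cast h3
    exact ⟨j, by linarith⟩
  have hpow : Complex.exp ((θ:ℂ)*Complex.I) ^ (ℓ+1) = 1 := by
    rw [← Complex.exp_nat_mul]
    have : ((ℓ+1 : ℕ):ℂ) * ((θ:ℂ)*Complex.I) = (n:ℂ) * (2*π*Complex.I) := by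
      rw [hθ]
      push_cast
      have hl0' : ((ℓ:ℂ)+1) ≠ 0 := by exact_mod_cast hl0
      field_simp
    rw [this, Complex.exp_int_mul_two_pi_mul_I]
  have key : ∑ x ∈ Finset.range (ℓ+1), Complex.exp ((θ:ℂ)*Complex.I) ^ x = 0 := by
    rw [geom_sum_eq hω1, hpow]
    simp
  have keyre : ∑ x ∈ Finset.range (ℓ+1), Real.cos (θ * x) = 0 := by
    have := congrArg Complex.re key
    rw [Complex.re_sum, Complex.zero_re] at this
    rw [← this]
    apply Finset.sum_congr rfl
    intro x _
    rw [← Complex.exp_nat_mul]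
    have : (x:ℂ) * ((θ:ℂ)*Complex.I) = ((θ * x : ℝ):ℂ) * Complex.I := by push_cast; ring
    rw [this, Complex.exp_ofReal_mul_I_re]
  have hsplit : Finset.range (ℓ+1) = insert 0 (Finset.Icc 1 ℓ) := by
    ext a; simp [Finset.mem_range, Finset.mem_Icc]; omega
  rw [hsplit, Finset.sum_insert (by simp)] at keyre
  simp only [Nat.cast_zero, mul_zero, Real.cos_zero] at keyre
  have : ∑ x ∈ Finset.Icc 1 ℓ, Real.cos (θ * x) = -1 := by linarith
  rw [← this]
  apply Finset.sum_congr rfl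
  intro x _
  congr 1
  rw [hθ]; ring

lemma cos_sum_dvd (ℓ : ℕ) (n : ℤ) (hn : ((ℓ:ℤ)+1) ∣ n) :
    ∑ x ∈ Finset.Icc 1 ℓ, Real.cos (2*π*(n:ℝ)*(x:ℝ)/((ℓ:ℝ)+1)) = ℓ := by
  have hl0 : ((ℓ:ℝ)+1) ≠ 0 := by positivity
  obtain ⟨j, hj⟩ := hn
  have : ∀ x ∈ Finset.Icc 1 ℓ, Real.cos (2*π*(n:ℝ)*(x:ℝ)/((ℓ:ℝ)+1)) = 1 := by
    intro x _
    have : 2*π*(n:ℝ)*(x:ℝ)/((ℓ:ℝ)+1) = ((j*x : ℤ):ℝ) * (2*π) := by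
      have hn' : (n:ℝ) = ((ℓ:ℝ)+1) * (j:ℝ) := by exact_mod_cast hj
      rw [hn']
      push_cast
      field_simp
    rw [this, Real.cos_int_mul_two_pi]
  rw [Finset.sum_congr rfl this, Finset.sum_const, Nat.card_Icc]
  simp

lemma sin_sq_mul_sin_sq (a b : ℝ) :
    Real.sin a ^ 2 * Real.sin b ^ 2 =
      1/4 - Real.cos (2*a)/4 - Real.cos (2*b)/4
        + Real.cos (2*a + 2*b)/8 + Real.cos (2*a - 2*b)/8 := by
  rw [Real.sin_sq_eq_half_sub a, Real.sin_sq_eq_half_sub b, Real.cos_add, Real.cos_sub]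
  ring

theorem trig_sum_sin_sq_sin_sq (ℓ : ℕ) (hℓ : 1 ≤ ℓ) (k k' : ℝ)
    (hk : ∃ m ∈ Finset.Icc 1 ℓ, k = π * (m : ℝ) / (ℓ + 1))
    (hk' : ∃ m ∈ Finset.Icc 1 ℓ, k' = π * (m : ℝ) / (ℓ + 1)) :
    (2 / ((ℓ : ℝ) + 1)) * ∑ x ∈ Finset.Icc 1 ℓ,
        Real.sin ((x : ℝ) * k) ^ 2 * Real.sin ((x : ℝ) * k') ^ 2 =
      1 / 2 + (1 / 4) * ((if k = k' then (1 : ℝ) else 0) +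
        (if k + k' = π then (1 : ℝ) else 0)) := by
  obtain ⟨m, hm, rfl⟩ := hk
  obtain ⟨m', hm', rfl⟩ := hk'
  rw [Finset.mem_Icc] at hm hm'
  have hl0 : ((ℓ:ℝ)+1) ≠ 0 := by positivity
  have hπ := Real.pi_ne_zero
  -- rewrite summand
  have expand : ∀ x ∈ Finset.Icc 1 ℓ,
      Real.sin ((x:ℝ) * (π * m / (ℓ+1))) ^ 2 * Real.sin ((x:ℝ) * (π * m' / (ℓ+1))) ^ 2 =
        1/4 - Real.cos (2*π*((m:ℤ):ℝ)*(x:ℝ)/((ℓ:ℝ)+1))/4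
            - Real.cos (2*π*((m':ℤ):ℝ)*(x:ℝ)/((ℓ:ℝ)+1))/4
            + Real.cos (2*π*(((m:ℤ)+(m':ℤ)):ℝ)*(x:ℝ)/((ℓ:ℝ)+1))/8
            + Real.cos (2*π*(((m:ℤ)-(m':ℤ)):ℝ)*(x:ℝ)/((ℓ:ℝ)+1))/8 := by
    intro x _
    have e1 : 2*((x:ℝ) * (π * m / (ℓ+1))) = 2*π*((m:ℤ):ℝ)*(x:ℝ)/((ℓ:ℝ)+1) := by
      push_cast; field_simp
    have e2 : 2*((x:ℝ) * (π * m' / (ℓ+1))) = 2*π*((m':ℤ):ℝ)*(x:ℝ)/((ℓ:ℝ)+1) := by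
      push_cast; field_simp
    have e3 : 2*π*((m:ℤ):ℝ)*(x:ℝ)/((ℓ:ℝ)+1) + 2*π*((m':ℤ):ℝ)*(x:ℝ)/((ℓ:ℝ)+1)
        = 2*π*(((m:ℤ)+(m':ℤ)):ℝ)*(x:ℝ)/((ℓ:ℝ)+1) := by
      push_cast; ring
    have e4 : 2*π*((m:ℤ):ℝ)*(x:ℝ)/((ℓ:ℝ)+1) - 2*π*((m':ℤ):ℝ)*(x:ℝ)/((ℓ:ℝ)+1)
        = 2*π*(((m:ℤ)-(m':ℤ)):ℝ)*(x:ℝ)/((ℓ:ℝ)+1) := by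
      push_cast; ring
    rw [sin_sq_mul_sin_sq, e1, e2, e3, e4]
  rw [Finset.sum_congr rfl expand]
  have hcard : (Finset.Icc 1 ℓ).card = ℓ := by rw [Nat.card_Icc]; simp
  rw [Finset.sum_add_distrib, Finset.sum_add_distrib, Finset.sum_sub_distrib,
    Finset.sum_sub_distrib, Finset.sum_const, hcard]
  rw [← Finset.sum_div, ← Finset.sum_div, ← Finset.sum_div, ← Finset.sum_div]
  -- values of the four cosine sums
  have hA : ∑ x ∈ Finset.Icc 1 ℓ, Real.cos (2*π*((m:ℤ):ℝ)*(x:ℝ)/((ℓ:ℝ)+1)) = -1 := by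
    apply cos_sum_not_dvd
    intro hd
    have := Int.le_of_dvd (by exact_mod_cast hm.1) hd
    omega
  have hB : ∑ x ∈ Finset.Icc 1 ℓ, Real.cos (2*π*((m':ℤ):ℝ)*(x:ℝ)/((ℓ:ℝ)+1)) = -1 := by
    apply cos_sum_not_dvd
    intro hd
    have := Int.le_of_dvd (by exact_mod_cast hm'.1) hd
    omega
  have hkk' : (π * (m:ℝ) / (ℓ+1) = π * (m':ℝ) / (ℓ+1)) ↔ m = m' := by
    constructor
    · intro h
      field_simp at h
      exact_mod_cast (by linarith : (m:ℝ) = m')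
    · intro h; rw [h]
  have hsum' : (π * (m:ℝ) / (ℓ+1) + π * (m':ℝ) / (ℓ+1) = π) ↔ m + m' = ℓ + 1 := by
    constructor
    · intro h
      have : (m:ℝ) + (m':ℝ) = (ℓ:ℝ) + 1 := by
        field_simp at h
        nlinarith [Real.pi_pos]
      exact_mod_cast this
    · intro h
      have hmr : (m:ℝ) + (m':ℝ) = (ℓ:ℝ) + 1 := by exact_mod_cast h
      rw [← add_div, ← mul_add, hmr, mul_div_assoc, div_self hl0, mul_one]
  have hD : ∑ x ∈ Finset.Icc 1 ℓ, Real.cos (2*π*(((m:ℤ)-(m':ℤ)):ℝ)*(x:ℝ)/((ℓ:ℝ)+1))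
      = if m = m' then (ℓ:ℝ) else -1 := by
    have hcast : ((m:ℤ):ℝ) - ((m':ℤ):ℝ) = (Int.cast ((m:ℤ)-(m':ℤ)) : ℝ) := by
      push_cast; ring
    simp only [hcast]
    by_cases h : m = m'
    · rw [if_pos h]
      refine cos_sum_dvd ℓ ((m:ℤ)-(m':ℤ)) ?_
      subst h
      simp only [sub_self]
      exact dvd_zero _
    · rw [if_neg h]
      refine cos_sum_not_dvd ℓ ((m:ℤ)-(m':ℤ)) ?_
      intro hd
      have := Int.eq_zero_of_dvd_of_natAbs_lt_natAbs hd (by omega)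
      omega
  have hC : ∑ x ∈ Finset.Icc 1 ℓ, Real.cos (2*π*(((m:ℤ)+(m':ℤ)):ℝ)*(x:ℝ)/((ℓ:ℝ)+1))
      = if m + m' = ℓ + 1 then (ℓ:ℝ) else -1 := by
    have hcast : ((m:ℤ):ℝ) + ((m':ℤ):ℝ) = (Int.cast ((m:ℤ)+(m':ℤ)) : ℝ) := by
      push_cast; ring
    simp only [hcast]
    by_cases h : m + m' = ℓ + 1
    · rw [if_pos h]
      refine cos_sum_dvd ℓ ((m:ℤ)+(m':ℤ)) ?_
      exact ⟨1, by omega⟩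
    · rw [if_neg h]
      refine cos_sum_not_dvd ℓ ((m:ℤ)+(m':ℤ)) ?_
      rintro ⟨j, hj⟩
      have h1 : (1:ℤ) ≤ m + m' := by omega
      have h2 : (m:ℤ) + m' ≤ 2*ℓ := by omega
      have hj1 : j = 1 := by nlinarith
      rw [hj1, mul_one] at hj
      omega
  rw [hA, hB, hC, hD]
  simp only [hkk', hsum', nsmul_eq_mul]
  by_cases h1 : m = m' <;> by_cases h2 : m + m' = ℓ + 1
  · simp only [if_pos h1, if_pos h2]; field_simp; ring
  · simp only [if_pos h1, if_neg h2]; field_simp; ring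
  · simp only [if_neg h1, if_pos h2]; field_simp; ring
  · simp only [if_neg h1, if_neg h2]; field_simp; ring
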